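/- Every compact subset of the Euclidean plane ℝ² is strongly good: for every surjective isometry f : ℝ² → ℝ² with f(A) ⊆ A, one has f(A) = A. -/
import Mathlib


open Set Function

abbrev Plane := EuclideanSpace ℝ (Fin 2)

/-- Geometric equality: some surjective isometry of the plane maps `S₁` onto `S₂`. -/
def GeomEq (S₁ S₂ : Set Plane) : Prop :=
  ∃ f : Plane → Plane, Isometry f ∧ Function.Surjective f ∧ f '' S₁ = S₂

/-- `S₁` is equal to or smaller than `S₂`: some surjective isometry maps `S₁` into `S₂`. -/
def GeomLe (S₁ S₂ : Set Plane) : Prop :=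
  ∃ f : Plane → Plane, Isometry f ∧ Function.Surjective f ∧ f '' S₁ ⊆ S₂

/-- A figure is good if `A ≤ B` and `B ≤ A` imply `A ≈ B` for every figure `B`. -/
def IsGood (A : Set Plane) : Prop :=
  ∀ B : Set Plane, GeomLe A B → GeomLe B A → GeomEq A B

/-- A figure is strongly good if every surjective isometry mapping it into itself maps it onto itself. -/
def IsStronglyGood (A : Set Plane) : Prop :=
  ∀ f : Plane → Plane, Isometry f → Function.Surjective f → f '' A ⊆ A → f '' A = A

/-- Proposition 1.6: every compact subset of the plane is strongly good. -/
theorem isStronglyGood_of_isCompact (A : Set Plane) (hA : IsCompact A) :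
    IsStronglyGood A := by
  intro f hf hsurj hsub
  have hmaps : ∀ x ∈ A, f x ∈ A := fun x hx => hsub ⟨x, hx, rfl⟩
  have himg : IsCompact (f '' A) := hA.image hf.continuous
  refine Subset.antisymm hsub fun a ha => ?_
  have hiter : ∀ n, Isometry (f^[n]) := by
    intro n
    induction n with
    | zero => simpa using isometry_id
    | succ n ih => rw [Function.iterate_succ]; exact ih.comp hf
  have hmem : ∀ n, f^[n] a ∈ A := by
    intro n
    induction n with
    | zero => simpa using ha
    | succ n ih => rw [Function.iterate_succ_apply']; exact hmaps _ ih
  have hclosed : IsClosed (f '' A) := himg.isClosed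
  rw [← hclosed.closure_eq]
  rw [Metric.mem_closure_iff]
  intro ε hε
  obtain ⟨x, -, φ, hφ, hconv⟩ := hA.tendsto_subseq hmem
  have hcau := hconv.cauchySeq
  rw [Metric.cauchySeq_iff] at hcau
  obtain ⟨N, hN⟩ := hcau ε hε
  have hlt : φ N < φ (N + 1) := hφ (Nat.lt_succ_self N)
  have hd : dist (f^[φ N] a) (f^[φ (N + 1)] a) < ε := hN N le_rfl (N + 1) (Nat.le_succ N)
  obtain ⟨k, hk⟩ := Nat.exists_eq_add_of_lt hlt
  -- φ (N+1) = φ N + k + 1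
  have hsplit : f^[φ (N + 1)] a = f^[φ N] (f (f^[k] a)) := by
    rw [hk]
    calc f^[φ N + k + 1] a = f^[φ N] (f^[k + 1] a) := by
          rw [← Function.iterate_add_apply]; ring_nf
      _ = f^[φ N] (f (f^[k] a)) := by rw [Function.iterate_succ_apply']
  refine ⟨f (f^[k] a), ⟨f^[k] a, hmem k, rfl⟩, ?_⟩
  calc dist a (f (f^[k] a)) = dist (f^[φ N] a) (f^[φ N] (f (f^[k] a))) :=
        ((hiter (φ N)).dist_eq _ _).symm
    _ < ε := by rw [← hsplit]; exact hd
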